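/- Let V be a finite-dimensional F_2-vector space and P : V → F_2 a map with P(0)=0 of combinatorial degree r+1. Then there exists a binary linear code C of level r (i.e., r is the largest integer with 2^r dividing the weight of every codeword) and an F_2-linear isomorphism φ : V → C such that P(v) ≡ |φ(v)| / 2^r (mod 2) for every v ∈ V. -/

import Mathlib

/-- Hamming weight of a vector in `F_2^n`. -/
def wt {n : ℕ} (v : Fin n → ZMod 2) : ℕ :=
  (Finset.univ.filter fun i => v i = 1).card

/-- The `s`-th derived form of `P`. -/
def derForm {V : Type*} [AddCommMonoid V] (P : V → ZMod 2) (s : ℕ)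
    (v : Fin s → V) : ZMod 2 :=
  ∑ J : Finset (Fin s), P (∑ j ∈ J, v j)

open Finset

lemma zmod2_cast_eq_one_iff (n : ℕ) : (n : ZMod 2) = 1 ↔ ¬ Even n := by
  have : (n : ZMod 2) = ((n % 2 : ℕ) : ZMod 2) := by
    conv_lhs => rw [← Nat.div_add_mod n 2]
    push_cast
    have : ((2:ℕ):ZMod 2) = 0 := by decide
    push_cast at this
    rw [this]; ring
  rw [this, Nat.even_iff]
  rcases Nat.mod_two_eq_zero_or_one n with h | h <;> simp [h] <;> decide

lemma zmod2_pow_even (k : ℕ) (hk : k ≠ 0) : (((2 ^ k : ℕ)) : ZMod 2) = 0 := by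
  push_cast
  rw [show ((2:ZMod 2)) = 0 by decide, zero_pow hk]

-- L1: parity count
lemma count_odd_inter {m : ℕ} (S X : Finset (Fin m)) :
    #(S.powerset.filter fun A => ¬ Even (#(A ∩ X)))
      = if (S ∩ X).Nonempty then 2 ^ (#S - 1) else 0 := by
  split_ifs with h
  · obtain ⟨i, hi⟩ := h
    have hiS : i ∈ S := (mem_inter.mp hi).1
    have hiX : i ∈ X := (mem_inter.mp hi).2
    set τ : Finset (Fin m) → Finset (Fin m) := fun A => if i ∈ A then A.erase i else insert i A with hτ
    have hflip : ∀ A ∈ S.powerset, (τ A ∈ S.powerset ∧ (¬ Even (#(A ∩ X)) ↔ Even (#(τ A ∩ X)))) ∧ τ (τ A) = A := by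
      intro A hA
      rw [mem_powerset] at hA
      by_cases hiA : i ∈ A
      · have h1 : τ A = A.erase i := by simp [hτ, hiA]
        have hii : i ∉ A.erase i := notMem_erase i A
        have h2 : τ (τ A) = A := by rw [h1]; simp [hτ, hii, insert_erase hiA]
        have hint : A.erase i ∩ X = (A ∩ X).erase i := by
          ext j; simp only [mem_erase, mem_inter]; tauto
        have hmem : i ∈ A ∩ X := mem_inter.mpr ⟨hiA, hiX⟩
        have hcard : #(A ∩ X) ≠ 0 := card_ne_zero_of_mem hmem
        refine ⟨⟨?_, ?_⟩, h2⟩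
        · rw [mem_powerset, h1]; exact (erase_subset i A).trans hA
        · rw [h1, hint, card_erase_of_mem hmem, Nat.even_sub (Nat.one_le_iff_ne_zero.mpr hcard)]
          simp only [Nat.even_iff]; omega
      · have h1 : τ A = insert i A := by simp [hτ, hiA]
        have h2 : τ (τ A) = A := by rw [h1]; simp [hτ, mem_insert_self, erase_insert hiA]
        have hint : insert i A ∩ X = insert i (A ∩ X) := by
          ext j; simp only [mem_insert, mem_inter]; constructor
          · rintro ⟨hj | hj, hjx⟩
            · exact Or.inl hj
            · exact Or.inr ⟨hj, hjx⟩
          · rintro (hj | ⟨hj, hjx⟩)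
            · subst hj; exact ⟨Or.inl rfl, hiX⟩
            · exact ⟨Or.inr hj, hjx⟩
        have hni : i ∉ A ∩ X := fun hc => hiA (mem_inter.mp hc).1
        refine ⟨⟨?_, ?_⟩, h2⟩
        · rw [mem_powerset, h1, insert_subset_iff]; exact ⟨hiS, hA⟩
        · rw [h1, hint, card_insert_of_notMem hni]
          rw [Nat.even_add_one]
      done
    have key : #(S.powerset.filter fun A => ¬ Even (#(A ∩ X)))
        = #(S.powerset.filter fun A => ¬ ¬ Even (#(A ∩ X))) := by
      apply card_bij' (fun A _ => τ A) (fun A _ => τ A)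
      · intro A hA
        rw [mem_filter] at hA ⊢
        obtain ⟨⟨h1, h2⟩, _⟩ := hflip A hA.1
        exact ⟨h1, by tauto⟩
      · intro A hA
        rw [mem_filter] at hA ⊢
        obtain ⟨⟨h1, h2⟩, _⟩ := hflip A hA.1
        refine ⟨h1, ?_⟩
        push_neg at hA
        tauto
      · intro A hA; exact (hflip A (mem_filter.mp hA).1).2
      · intro A hA; exact (hflip A (mem_filter.mp hA).1).2
    have htot := card_filter_add_card_filter_not (s := S.powerset)
      (fun A => ¬ Even (#(A ∩ X)))
    rw [card_powerset] at htot
    have hS1 : 1 ≤ #S := card_pos.mpr ⟨i, hiS⟩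
    have : 2 ^ #S = 2 * 2 ^ (#S - 1) := by
      rw [← pow_succ']
      congr 1; omega
    omega
  · rw [card_eq_zero, filter_eq_empty_iff]
    intro A hA
    rw [mem_powerset] at hA
    have : A ∩ X ⊆ S ∩ X := inter_subset_inter hA (Subset.refl X)
    rw [not_nonempty_iff_eq_empty] at h
    rw [h] at this
    rw [subset_empty.mp this]
    simp

-- L3: number of S ⊆ T meeting X
lemma count_meet {m : ℕ} (T X : Finset (Fin m)) :
    #(T.powerset.filter fun S => (S ∩ X).Nonempty) = 2 ^ #T - 2 ^ #(T \ X) := by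
  have h1 : T.powerset.filter (fun S => ¬ (S ∩ X).Nonempty) = (T \ X).powerset := by
    ext S
    simp only [mem_filter, mem_powerset, not_nonempty_iff_eq_empty,
      ← disjoint_iff_inter_eq_empty, subset_sdiff]
  have h2 := card_filter_add_card_filter_not (s := T.powerset)
    (fun S => (S ∩ X).Nonempty)
  rw [card_powerset, h1, card_powerset] at h2
  omega

-- count of T with U ⊆ T ⊆ S
lemma count_between {m : ℕ} (U S : Finset (Fin m)) (hUS : U ⊆ S) :
    #(S.powerset.filter fun T => U ⊆ T) = 2 ^ #(S \ U) := by
  rw [← card_powerset]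
  apply card_bij' (fun T _ => T \ U) (fun W _ => W ∪ U)
  · intro T hT
    rw [mem_filter, mem_powerset] at hT
    rw [mem_powerset]
    exact sdiff_subset_sdiff hT.1 (Subset.refl U)
  · intro W hW
    rw [mem_powerset] at hW
    rw [mem_filter, mem_powerset]
    rw [subset_sdiff] at hW
    exact ⟨union_subset hW.1 hUS, subset_union_right⟩
  · intro T hT
    rw [mem_filter, mem_powerset] at hT
    exact sdiff_union_of_subset hT.2
  · intro W hW
    rw [mem_powerset, subset_sdiff] at hW
    exact union_sdiff_cancel_right hW.2
  done

-- Möbius: double powerset sum collapses (char 2)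
lemma mobius2 {m : ℕ} (q : Finset (Fin m) → ZMod 2) (S : Finset (Fin m)) :
    ∑ T ∈ S.powerset, ∑ U ∈ T.powerset, q U = q S := by
  have step1 : ∀ T ∈ S.powerset, ∑ U ∈ T.powerset, q U
      = ∑ U ∈ S.powerset, if U ⊆ T then q U else 0 := by
    intro T hT
    rw [mem_powerset] at hT
    rw [← Finset.sum_filter]
    congr 1
    ext U
    simp only [mem_filter, mem_powerset]
    exact ⟨fun h => ⟨h.trans hT, h⟩, fun h => h.2⟩
  rw [Finset.sum_congr rfl step1, Finset.sum_comm]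
  have step2 : ∀ U ∈ S.powerset, (∑ T ∈ S.powerset, if U ⊆ T then q U else 0)
      = if U = S then q S else 0 := by
    intro U hU
    rw [mem_powerset] at hU
    rw [← Finset.sum_filter, Finset.sum_const, count_between U S hU]
    split_ifs with h
    · subst h; simp
    · have : #(S \ U) ≠ 0 := by
        rw [Nat.ne_zero_iff_zero_lt, card_pos, sdiff_nonempty]
        intro hc
        exact h (Subset.antisymm hU hc)
      rw [nsmul_eq_mul]
      have h2 : (((2:ℕ) ^ #(S \ U) : ℕ) : ZMod 2) = 0 := by
        push_cast
        rw [show ((2:ZMod 2)) = 0 by decide, zero_pow this]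
      rw [h2, zero_mul]
  rw [Finset.sum_congr rfl step2, Finset.sum_ite_eq' S.powerset S (fun _ => q S)]
  simp

lemma sum_powerset_eq_derForm {V : Type*} [AddCommMonoid V] (P : V → ZMod 2) {m : ℕ}
    (g : Fin m → V) (T : Finset (Fin m)) :
    ∑ U ∈ T.powerset, P (∑ i ∈ U, g i)
      = derForm P (#T) (fun j => g (T.orderIsoOfFin rfl j)) := by
  set o := T.orderIsoOfFin rfl with ho
  set c : Fin (#T) → Fin m := fun j => ((o j : {x // x ∈ T}) : Fin m) with hc
  have hcinj : Function.Injective c := by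
    intro a b h
    exact o.injective (Subtype.ext h)
  have hcT : ∀ j, c j ∈ T := fun j => (o j).2
  have hsurj : ∀ i ∈ T, ∃ j, c j = i := by
    intro i hi
    obtain ⟨j, hj⟩ := o.surjective ⟨i, hi⟩
    exact ⟨j, by simp only [hc, hj]⟩
  rw [derForm]
  apply Finset.sum_nbij' (i := fun U => univ.filter fun j => c j ∈ U)
    (j := fun J => J.image c)
  · intro U _; exact mem_univ _
  · intro J _
    rw [mem_powerset]
    intro i hi
    obtain ⟨j, _, rfl⟩ := mem_image.mp hi
    exact hcT j
  · intro U hU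
    rw [mem_powerset] at hU
    ext i
    simp only [mem_image, mem_filter, mem_univ, true_and]
    constructor
    · rintro ⟨j, hj, rfl⟩; exact hj
    · intro hi
      obtain ⟨j, rfl⟩ := hsurj i (hU hi)
      exact ⟨j, hi, rfl⟩
  · intro J _
    ext j
    simp only [mem_filter, mem_univ, true_and, mem_image]
    constructor
    · rintro ⟨j', hj', hj⟩
      rwa [← hcinj hj]
    · intro hj; exact ⟨j, hj, rfl⟩
  · intro U hU
    rw [mem_powerset] at hU
    congr 1
    have himg : (univ.filter fun j => c j ∈ U).image c = U := by
      ext i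
      simp only [mem_image, mem_filter, mem_univ, true_and]
      constructor
      · rintro ⟨j, hj, rfl⟩; exact hj
      · intro hi
        obtain ⟨j, rfl⟩ := hsurj i (hU hi)
        exact ⟨j, hi, rfl⟩
    conv_lhs => rw [← himg]
    rw [Finset.sum_image (fun a _ b _ h => hcinj h)]

lemma eq_sum_basis {V : Type*} [AddCommGroup V] [Module (ZMod 2) V] {m : ℕ}
    (b : Module.Basis (Fin m) (ZMod 2) V) (v : V) :
    v = ∑ i ∈ (univ.filter fun i => b.equivFun v i = 1), b i := by
  conv_lhs => rw [← b.sum_equivFun v]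
  rw [← Finset.sum_filter_of_ne (p := fun i => b.equivFun v i = 1)
    (f := fun i => b.equivFun v i • b i)]
  · apply Finset.sum_congr rfl
    intro i hi
    rw [(mem_filter.mp hi).2, one_smul]
  · intro i _ h
    by_contra hne
    apply h
    have : b.equivFun v i = 0 := by
      have := b.equivFun v i
      revert hne
      generalize b.equivFun v i = a
      revert a; decide
    rw [this, zero_smul]

abbrev BaseT (m : ℕ) := Finset (Fin m) × Finset (Fin m) × Finset (Fin m)

def multT {m : ℕ} (r : ℕ) (𝒯 : Finset (Finset (Fin m))) (p : BaseT m) : ℕ :=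
  if p.1 ∈ 𝒯 ∧ p.2.2 ⊆ p.2.1 ∧ p.2.1 ⊆ p.1 then 2 ^ (r + 1 - #p.2.1) else 0

abbrev IdxT (m r : ℕ) (𝒯 : Finset (Finset (Fin m))) :=
  (Σ p : BaseT m, Fin (multT r 𝒯 p)) ⊕ (Fin m × Fin (2 ^ (r + 1)))

def FvecT {m : ℕ} (r : ℕ) (𝒯 : Finset (Finset (Fin m))) : IdxT m r 𝒯 → Fin m → ZMod 2
  | .inl q => fun j => if j ∈ q.1.2.2 then 1 else 0
  | .inr q => fun j => if j = q.1 then 1 else 0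

def suppF {m : ℕ} (x : Fin m → ZMod 2) : Finset (Fin m) :=
  univ.filter fun j => x j = 1

lemma zmod2_val (a : ZMod 2) : a = if a = 1 then (1 : ZMod 2) else 0 := by
  revert a; decide

lemma sum_over_subset {m : ℕ} (A : Finset (Fin m)) (x : Fin m → ZMod 2) :
    ∑ j ∈ A, x j = ((#(A ∩ suppF x) : ℕ) : ZMod 2) := by
  have h1 : ∑ j ∈ A, x j = ∑ j ∈ A, if x j = 1 then 1 else 0 :=
    Finset.sum_congr rfl fun j _ => zmod2_val (x j)
  rw [h1, Finset.sum_boole]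
  have h2 : A.filter (fun j => x j = 1) = A ∩ suppF x := by
    ext j
    simp [suppF, mem_inter, mem_filter, and_comm]
  rw [h2]

lemma word_inl {m : ℕ} (r : ℕ) (𝒯 : Finset (Finset (Fin m))) (x : Fin m → ZMod 2)
    (q : Σ p : BaseT m, Fin (multT r 𝒯 p)) :
    (Matrix.of (FvecT r 𝒯)).mulVec x (.inl q) = ((#(q.1.2.2 ∩ suppF x) : ℕ) : ZMod 2) := by
  rw [← sum_over_subset]
  rw [Matrix.mulVec]
  show ∑ j, FvecT r 𝒯 (.inl q) j * x j = _
  have : ∀ j, FvecT r 𝒯 (.inl q) j * x j = if j ∈ q.1.2.2 then x j else 0 := by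
    intro j
    rw [FvecT]
    by_cases h : j ∈ q.1.2.2 <;> simp [h]
  rw [Finset.sum_congr rfl fun j _ => this j, Finset.sum_ite_mem, univ_inter]

lemma word_inr {m : ℕ} (r : ℕ) (𝒯 : Finset (Finset (Fin m))) (x : Fin m → ZMod 2)
    (q : Fin m × Fin (2 ^ (r + 1))) :
    (Matrix.of (FvecT r 𝒯)).mulVec x (.inr q) = x q.1 := by
  rw [Matrix.mulVec]
  show ∑ j, FvecT r 𝒯 (.inr q) j * x j = _
  have : ∀ j, FvecT r 𝒯 (.inr q) j * x j = if j = q.1 then x j else 0 := by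
    intro j
    rw [FvecT]
    by_cases h : j = q.1 <;> simp [h]
  rw [Finset.sum_congr rfl fun j _ => this j, Finset.sum_ite_eq' univ q.1 x]
  simp

lemma wt_count {m : ℕ} (r : ℕ) (𝒯 : Finset (Finset (Fin m)))
    (h𝒯 : ∀ T ∈ 𝒯, T.Nonempty ∧ #T ≤ r + 1) (x : Fin m → ZMod 2) :
    #(univ.filter fun i : IdxT m r 𝒯 => (Matrix.of (FvecT r 𝒯)).mulVec x i = 1)
      = 2 ^ r * ((∑ T ∈ 𝒯, (2 ^ #T - 2 ^ #(T \ suppF x))) + 2 * #(suppF x)) := by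
  set X := suppF x with hX
  rw [Finset.card_filter, Fintype.sum_sum_type]
  have hinr : (∑ q : Fin m × Fin (2 ^ (r + 1)),
      if (Matrix.of (FvecT r 𝒯)).mulVec x (.inr q) = 1 then 1 else 0)
      = 2 ^ (r + 1) * #X := by
    rw [Fintype.sum_prod_type]
    have h1 : ∀ j0 : Fin m, (∑ k : Fin (2 ^ (r + 1)),
        if (Matrix.of (FvecT r 𝒯)).mulVec x (.inr (j0, k)) = 1 then 1 else 0)
        = if j0 ∈ X then 2 ^ (r + 1) else 0 := by
      intro j0
      have : ∀ k : Fin (2 ^ (r + 1)),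
          (if (Matrix.of (FvecT r 𝒯)).mulVec x (.inr (j0, k)) = 1 then (1:ℕ) else 0)
          = if j0 ∈ X then 1 else 0 := by
        intro k
        rw [word_inr]
        congr 1
        simp [hX, suppF]
      rw [Finset.sum_congr rfl fun k _ => this k, Finset.sum_const, card_univ,
        Fintype.card_fin, smul_eq_mul]
      split_ifs <;> simp
    rw [Finset.sum_congr rfl fun j0 _ => h1 j0, Finset.sum_ite_mem, univ_inter,
      Finset.sum_const, smul_eq_mul, mul_comm]
  have hinl : (∑ q : Σ p : BaseT m, Fin (multT r 𝒯 p),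
      if (Matrix.of (FvecT r 𝒯)).mulVec x (.inl q) = 1 then 1 else 0)
      = 2 ^ r * ∑ T ∈ 𝒯, (2 ^ #T - 2 ^ #(T \ X)) := by
    have hA : ∀ q : Σ p : BaseT m, Fin (multT r 𝒯 p),
        (if (Matrix.of (FvecT r 𝒯)).mulVec x (.inl q) = 1 then (1:ℕ) else 0)
        = if ¬ Even #(q.1.2.2 ∩ X) then 1 else 0 := by
      intro q
      rw [word_inl]
      congr 1
      simp only [eq_iff_iff]
      exact zmod2_cast_eq_one_iff _
    rw [Finset.sum_congr rfl fun q _ => hA q]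
    have hsig : (∑ q : Σ p : BaseT m, Fin (multT r 𝒯 p),
        if ¬ Even #(q.1.2.2 ∩ X) then (1:ℕ) else 0)
        = ∑ p : BaseT m, multT r 𝒯 p * (if ¬ Even #(p.2.2 ∩ X) then 1 else 0) := by
      rw [← Finset.univ_sigma_univ, Finset.sum_sigma]
      apply Finset.sum_congr rfl
      intro p _
      show (∑ _k : Fin (multT r 𝒯 p), if ¬ Even #(p.2.2 ∩ X) then (1:ℕ) else 0)
        = multT r 𝒯 p * (if ¬ Even #(p.2.2 ∩ X) then 1 else 0)
      rw [Finset.sum_const, card_univ, Fintype.card_fin, smul_eq_mul]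

    rw [hsig, Fintype.sum_prod_type]
    have expand : ∀ T : Finset (Fin m),
        (∑ y : Finset (Fin m) × Finset (Fin m),
          multT r 𝒯 (T, y) * (if ¬ Even #((T, y).2.2 ∩ X) then 1 else 0))
        = ∑ S : Finset (Fin m), ∑ A : Finset (Fin m),
            multT r 𝒯 (T, S, A) * (if ¬ Even #(A ∩ X) then 1 else 0) := by
      intro T
      exact Fintype.sum_prod_type _
    rw [Finset.sum_congr rfl fun T _ => expand T]
    have hstep1 : ∀ T S : Finset (Fin m),
        (∑ A : Finset (Fin m), multT r 𝒯 (T, S, A) * (if ¬ Even #(A ∩ X) then 1 else 0))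
        = if T ∈ 𝒯 ∧ S ⊆ T then
            (if (S ∩ X).Nonempty then 2 ^ (r + 1 - #S) * 2 ^ (#S - 1) else 0) else 0 := by
      intro T S
      by_cases h : T ∈ 𝒯 ∧ S ⊆ T
      · have hm : ∀ A : Finset (Fin m), multT r 𝒯 (T, S, A)
            = if A ⊆ S then 2 ^ (r + 1 - #S) else 0 := by
          intro A
          simp [multT, h.1, h.2]
        have hterm : ∀ A : Finset (Fin m),
            multT r 𝒯 (T, S, A) * (if ¬ Even #(A ∩ X) then 1 else 0)
            = if A ⊆ S then (if ¬ Even #(A ∩ X) then 2 ^ (r + 1 - #S) else 0) else 0 := by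
          intro A
          rw [hm A]
          split_ifs <;> ring
        have hps : (univ.filter fun A : Finset (Fin m) => A ⊆ S) = S.powerset := by
          ext A; simp [mem_powerset]
        rw [Finset.sum_congr rfl fun A _ => hterm A, ← Finset.sum_filter, hps,
          ← Finset.sum_filter, Finset.sum_const, smul_eq_mul, count_odd_inter S X, if_pos h]
        split_ifs <;> ring
      · have hm : ∀ A : Finset (Fin m), multT r 𝒯 (T, S, A) = 0 := by
          intro A
          simp only [multT]
          rw [if_neg]
          tauto
        rw [if_neg h]
        simp [hm]
    rw [Finset.sum_congr rfl fun T _ => Finset.sum_congr rfl fun S _ => hstep1 T S]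
    have hstep2 : ∀ T ∈ 𝒯, (∑ S : Finset (Fin m),
        if T ∈ 𝒯 ∧ S ⊆ T then
          (if (S ∩ X).Nonempty then 2 ^ (r + 1 - #S) * 2 ^ (#S - 1) else 0) else 0)
        = 2 ^ r * (2 ^ #T - 2 ^ #(T \ X)) := by
      intro T hT
      have h1 : ∀ S : Finset (Fin m), (if T ∈ 𝒯 ∧ S ⊆ T then
          (if (S ∩ X).Nonempty then 2 ^ (r + 1 - #S) * 2 ^ (#S - 1) else 0) else 0)
          = if S ⊆ T then (if (S ∩ X).Nonempty then 2 ^ (r + 1 - #S) * 2 ^ (#S - 1) else 0)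
            else 0 := by
        intro S
        by_cases hS : S ⊆ T <;> simp [hS, hT]
      have hps : (univ.filter fun S : Finset (Fin m) => S ⊆ T) = T.powerset := by
        ext S; simp [mem_powerset]
      rw [Finset.sum_congr rfl fun S _ => h1 S, ← Finset.sum_filter, hps]
      have h2 : ∀ S ∈ T.powerset,
          (if (S ∩ X).Nonempty then 2 ^ (r + 1 - #S) * 2 ^ (#S - 1) else 0)
          = if (S ∩ X).Nonempty then 2 ^ r else 0 := by
        intro S hS
        rw [mem_powerset] at hS
        split_ifs with hne
        · obtain ⟨i, hi⟩ := hne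
          have h1S : 1 ≤ #S := card_pos.mpr ⟨i, (mem_inter.mp hi).1⟩
          have hSr : #S ≤ r + 1 := le_trans (card_le_card hS) (h𝒯 T hT).2
          rw [← pow_add]
          congr 1
          omega
        · rfl
      rw [Finset.sum_congr rfl h2, ← Finset.sum_filter, Finset.sum_const, smul_eq_mul,
        count_meet T X, mul_comm]
    rw [← Finset.sum_subset (subset_univ 𝒯) (by
      intro T _ hT
      apply Finset.sum_eq_zero
      intro S _
      rw [if_neg]
      tauto)]
    rw [Finset.sum_congr rfl hstep2, Finset.mul_sum]
  rw [hinl, hinr]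
  rw [pow_succ]
  ring

lemma wt_comp_equiv {n : ℕ} {I : Type*} [Fintype I] [DecidableEq I]
    (g : I → ZMod 2) (eqv : Fin n ≃ I) :
    wt (fun i => g (eqv i)) = #(univ.filter fun i : I => g i = 1) := by
  rw [wt]
  apply card_bij' (fun i _ => eqv i) (fun i _ => eqv.symm i)
  · intro i hi
    rw [mem_filter] at hi ⊢
    exact ⟨mem_univ _, hi.2⟩
  · intro i hi
    rw [mem_filter] at hi ⊢
    refine ⟨mem_univ _, ?_⟩
    simpa using hi.2
  · intro i _; simp
  · intro i _; simp

lemma zmod2_ne_zero (a : ZMod 2) (h : a ≠ 0) : a = 1 :=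
  (by decide : ∀ a : ZMod 2, a ≠ 0 → a = 1) a h

/-- Main Theorem: if `P : V → F_2`, `P(0) = 0`, has combinatorial degree `r + 1`,
then there is a binary linear code `C` of level `r` and an isomorphism `φ : V ≃ C`
with `P(v) ≡ |φ(v)| / 2^r (mod 2)` for every `v`. -/
theorem main_theorem {V : Type*} [AddCommGroup V] [Module (ZMod 2) V]
    [FiniteDimensional (ZMod 2) V] (r : ℕ) (P : V → ZMod 2) (hP : P 0 = 0)
    (hvanish : ∀ s, r + 1 < s → ∀ v : Fin s → V, derForm P s v = 0)
    (hne : ∃ v : Fin (r + 1) → V, derForm P (r + 1) v ≠ 0) :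
    ∃ (n : ℕ) (C : Submodule (ZMod 2) (Fin n → ZMod 2)) (φ : V ≃ₗ[ZMod 2] C),
      (∀ c ∈ C, 2 ^ r ∣ wt c) ∧ ¬(∀ c ∈ C, 2 ^ (r + 1) ∣ wt c) ∧
      ∀ v : V, 2 ^ r ∣ wt (φ v : Fin n → ZMod 2) ∧
        P v = ((wt (φ v : Fin n → ZMod 2) / 2 ^ r : ℕ) : ZMod 2) := by
  classical
  set m := Module.finrank (ZMod 2) V with hm
  set b : Module.Basis (Fin m) (ZMod 2) V := Module.finBasis (ZMod 2) V with hb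
  set e : V ≃ₗ[ZMod 2] (Fin m → ZMod 2) := b.equivFun with he
  set c : Finset (Fin m) → ZMod 2 := fun T => ∑ U ∈ T.powerset, P (∑ i ∈ U, b i) with hc
  set 𝒯 : Finset (Finset (Fin m)) := univ.filter fun T => c T = 1 with h𝒯def
  -- facts about 𝒯
  have hcT0 : ∀ T : Finset (Fin m), r + 1 < #T → c T = 0 := by
    intro T hT
    rw [hc]
    simp only
    rw [sum_powerset_eq_derForm P (fun i => b i) T]
    exact hvanish (#T) hT _
  have h𝒯 : ∀ T ∈ 𝒯, T.Nonempty ∧ #T ≤ r + 1 := by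
    intro T hT
    rw [h𝒯def, mem_filter] at hT
    constructor
    · rcases T.eq_empty_or_nonempty with rfl | h
      · exfalso
        have : c ∅ = 0 := by
          rw [hc]
          simp only
          rw [powerset_empty, Finset.sum_singleton, Finset.sum_empty, hP]
        rw [this] at hT
        exact absurd hT.2 (by decide)
      · exact h
    · by_contra h
      push_neg at h
      rw [hcT0 T h] at hT
      exact absurd hT.2 (by decide)
  -- P in terms of 𝒯
  have hPv : ∀ v : V, P v = ((#(𝒯.filter fun T => T ⊆ suppF (e v)) : ℕ) : ZMod 2) := by
    intro v
    set X := suppF (e v) with hXdef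
    have hvX : v = ∑ i ∈ X, b i := by
      have : X = univ.filter fun i => b.equivFun v i = 1 := by
        rw [hXdef, suppF]
      rw [this]
      exact eq_sum_basis b v
    have h1 : P v = ∑ T ∈ X.powerset, c T := by
      conv_lhs => rw [hvX, ← mobius2 (fun U => P (∑ i ∈ U, b i)) X]
    have h2 : ∀ T ∈ X.powerset, c T = if T ∈ 𝒯 then (1 : ZMod 2) else 0 := by
      intro T _
      by_cases h : T ∈ 𝒯
      · rw [if_pos h]
        rw [h𝒯def, mem_filter] at h
        exact h.2
      · rw [if_neg h]
        rw [h𝒯def, mem_filter] at h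
        by_contra hne0
        exact h ⟨mem_univ _, zmod2_ne_zero _ hne0⟩
    have h3 : X.powerset.filter (fun T => T ∈ 𝒯) = 𝒯.filter fun T => T ⊆ X := by
      ext T
      simp only [mem_filter, mem_powerset]
      tauto
    rw [h1, Finset.sum_congr rfl h2, Finset.sum_boole, h3]
  -- the linear map
  set M : Matrix (IdxT m r 𝒯) (Fin m) (ZMod 2) := Matrix.of (FvecT r 𝒯) with hM
  set Φ : V →ₗ[ZMod 2] (IdxT m r 𝒯 → ZMod 2) := M.mulVecLin ∘ₗ e.toLinearMap with hΦ
  have hΦapp : ∀ v, Φ v = M.mulVec (e v) := fun v => rfl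
  have hk0 : 0 < 2 ^ (r + 1) := Nat.pow_pos (by norm_num)
  have hΦinj : Function.Injective Φ := by
    intro v w h
    apply e.injective
    funext j
    have h1 := congrFun h (Sum.inr (j, ⟨0, hk0⟩))
    rw [hΦapp, hΦapp] at h1
    rw [hM] at h1
    rw [word_inr r 𝒯 (e v) (j, ⟨0, hk0⟩), word_inr r 𝒯 (e w) (j, ⟨0, hk0⟩)] at h1
    exact h1
  set n := Fintype.card (IdxT m r 𝒯) with hn
  set eqv : Fin n ≃ IdxT m r 𝒯 := (Fintype.equivFin (IdxT m r 𝒯)).symm with heqv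
  set Ψ : (IdxT m r 𝒯 → ZMod 2) ≃ₗ[ZMod 2] (Fin n → ZMod 2) :=
    LinearEquiv.funCongrLeft (ZMod 2) (ZMod 2) eqv with hΨ
  set Φ' : V →ₗ[ZMod 2] (Fin n → ZMod 2) := Ψ.toLinearMap ∘ₗ Φ with hΦ'
  have hΦ'inj : Function.Injective Φ' := by
    intro v w h
    apply hΦinj
    exact Ψ.injective h
  have hwt : ∀ v : V, wt (Φ' v)
      = 2 ^ r * ((∑ T ∈ 𝒯, (2 ^ #T - 2 ^ #(T \ suppF (e v)))) + 2 * #(suppF (e v))) := by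
    intro v
    have h1 : Φ' v = fun i => (M.mulVec (e v)) (eqv i) := rfl
    rw [h1, wt_comp_equiv (M.mulVec (e v)) eqv, hM]
    exact wt_count r 𝒯 h𝒯 (e v)
  have hcast : ∀ v : V,
      ((((∑ T ∈ 𝒯, (2 ^ #T - 2 ^ #(T \ suppF (e v)))) + 2 * #(suppF (e v)) : ℕ)) : ZMod 2)
      = P v := by
    intro v
    rw [hPv v]
    set X := suppF (e v) with hXdef
    have hterm : ∀ T ∈ 𝒯, (((2 ^ #T - 2 ^ #(T \ X) : ℕ)) : ZMod 2)
        = if T ⊆ X then 1 else 0 := by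
      intro T hT
      have hle : 2 ^ #(T \ X) ≤ 2 ^ #T :=
        Nat.pow_le_pow_right (by norm_num) (card_le_card sdiff_subset)
      rw [Nat.cast_sub hle]
      have h1 : ((2 ^ #T : ℕ) : ZMod 2) = 0 :=
        zmod2_pow_even _ (Nat.pos_iff_ne_zero.mp (card_pos.mpr (h𝒯 T hT).1))
      rw [h1, zero_sub]
      by_cases hTX : T ⊆ X
      · have h0 : #(T \ X) = 0 := by
          rw [card_eq_zero, sdiff_eq_empty_iff_subset]; exact hTX
        rw [h0, if_pos hTX, pow_zero]
        decide
      · have h0 : #(T \ X) ≠ 0 := by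
          rw [Ne, card_eq_zero, sdiff_eq_empty_iff_subset]; exact hTX
        rw [zmod2_pow_even _ h0, if_neg hTX, neg_zero]
    rw [Nat.cast_add, Nat.cast_sum, Finset.sum_congr rfl hterm, Finset.sum_boole,
      Nat.cast_mul]
    have h2 : ((2 : ℕ) : ZMod 2) = 0 := by decide
    rw [h2, zero_mul, add_zero]
  have hpow : 0 < 2 ^ r := Nat.pow_pos (by norm_num)
  refine ⟨n, LinearMap.range Φ', LinearEquiv.ofInjective Φ' hΦ'inj, ?_, ?_, ?_⟩
  · rintro cw hcw
    rw [LinearMap.mem_range] at hcw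
    obtain ⟨v, rfl⟩ := hcw
    rw [hwt v]
    exact Dvd.intro _ rfl
  · intro hall
    have hex : ∃ v : V, P v = 1 := by
      by_contra h
      push_neg at h
      apply hne.choose_spec
      rw [derForm]
      apply Finset.sum_eq_zero
      intro J _
      by_contra hnz
      exact h _ (zmod2_ne_zero _ (by
        intro h0
        exact hnz (by rw [h0])))
    obtain ⟨v, hv1⟩ := hex
    have hmem : Φ' v ∈ LinearMap.range Φ' := LinearMap.mem_range.mpr ⟨v, rfl⟩
    have hdvd := hall (Φ' v) hmem
    rw [hwt v] at hdvd
    rw [pow_succ] at hdvd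
    obtain ⟨k, hk⟩ := hdvd
    have hMk : (∑ T ∈ 𝒯, (2 ^ #T - 2 ^ #(T \ suppF (e v)))) + 2 * #(suppF (e v)) = 2 * k := by
      have := hk
      rw [mul_assoc] at this
      exact Nat.eq_of_mul_eq_mul_left hpow this
    have := hcast v
    rw [hMk, hv1] at this
    rw [Nat.cast_mul] at this
    have h2 : ((2 : ℕ) : ZMod 2) = 0 := by decide
    rw [h2, zero_mul] at this
    exact absurd this (by decide)
  · intro v
    have hco : ((LinearEquiv.ofInjective Φ' hΦ'inj v : Fin n → ZMod 2)) = Φ' v :=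
      LinearEquiv.ofInjective_apply Φ' v
    rw [hco, hwt v]
    refine ⟨Dvd.intro _ rfl, ?_⟩
    rw [Nat.mul_div_cancel_left _ hpow]
    exact (hcast v).symm
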